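/- A subset P of Q^n is a convex polyhedron (solution set of a finite system A x ≤ b) if and only if it can be written as the Minkowski sum of a finitely generated cone and a polytope (bounded polyhedron). -/

import Mathlib

open Matrix

/-- `P` is the solution set of a finite system of linear inequalities. -/
def IsPolyhedron {n : ℕ} (P : Set (Fin n → ℚ)) : Prop :=
  ∃ (m : ℕ) (A : Matrix (Fin m) (Fin n) ℚ) (b : Fin m → ℚ),
    P = {x | A.mulVec x ≤ b}

/-- `C` is a finitely generated cone: all nonnegative combinations of
finitely many vectors. -/
def IsFinitelyGeneratedCone {n : ℕ} (C : Set (Fin n → ℚ)) : Prop :=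
  ∃ (k : ℕ) (v : Fin k → (Fin n → ℚ)),
    C = {x | ∃ lam : Fin k → ℚ, 0 ≤ lam ∧ x = ∑ i, lam i • v i}

/-- A polytope is a bounded polyhedron. -/
def IsPolytope {n : ℕ} (P : Set (Fin n → ℚ)) : Prop :=
  IsPolyhedron P ∧ ∃ M : ℚ, ∀ x ∈ P, ∀ i, |x i| ≤ M

open Finset


/-- Solution set of a finite set of inequality constraints `(a, c)` meaning `a ⬝ᵥ x ≤ c`. -/
def SolSet {n : ℕ} (s : Finset ((Fin n → ℚ) × ℚ)) : Set (Fin n → ℚ) :=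
  {x | ∀ p ∈ s, p.1 ⬝ᵥ x ≤ p.2}

def IsFinPoly {n : ℕ} (P : Set (Fin n → ℚ)) : Prop := ∃ s, P = SolSet s

theorem isFinPoly_iff {n : ℕ} (P : Set (Fin n → ℚ)) : IsFinPoly P ↔ IsPolyhedron P := by
  constructor
  · rintro ⟨s, rfl⟩
    refine ⟨s.card, fun i => (s.equivFin.symm i).1.1, fun i => (s.equivFin.symm i).1.2, ?_⟩
    ext x
    simp only [SolSet, Set.mem_setOf_eq, Matrix.mulVec, Pi.le_def]
    constructor
    · intro h i
      exact h _ (s.equivFin.symm i).2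
    · intro h p hp
      have := h (s.equivFin ⟨p, hp⟩)
      rwa [Equiv.symm_apply_apply] at this
  · rintro ⟨m, A, b, rfl⟩
    refine ⟨Finset.univ.image fun i => (A i, b i), ?_⟩
    ext x
    simp only [SolSet, Set.mem_setOf_eq, Matrix.mulVec, Pi.le_def, Finset.mem_image,
      Finset.mem_univ, true_and]
    constructor
    · intro h p hp
      obtain ⟨i, rfl⟩ := hp
      exact h i
    · intro h i
      exact h _ ⟨i, rfl⟩

theorem dotProduct_snoc {n : ℕ} (a : Fin (n + 1) → ℚ) (x : Fin n → ℚ) (t : ℚ) :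
    a ⬝ᵥ Fin.snoc x t = Fin.init a ⬝ᵥ x + a (Fin.last n) * t := by
  simp [dotProduct, Fin.sum_univ_castSucc, Fin.init]

theorem dotProduct_append {n m : ℕ} (a : Fin n → ℚ) (b : Fin m → ℚ) (z : Fin (n + m) → ℚ) :
    Fin.append a b ⬝ᵥ z =
      a ⬝ᵥ (fun i => z (Fin.castAdd m i)) + b ⬝ᵥ (fun j => z (Fin.natAdd n j)) := by
  simp [dotProduct, Fin.sum_univ_add]


section FM
variable {n : ℕ}

theorem elim_one_aux (s : Finset ((Fin (n+1) → ℚ) × ℚ)) :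
    ∃ s' : Finset ((Fin n → ℚ) × ℚ),
      SolSet s' = {x : Fin n → ℚ | ∃ t, Fin.snoc x t ∈ SolSet s} := by
  classical
  set L : ℚ → (Fin (n+1) → ℚ) × ℚ → ℚ := fun _ p => p.1 (Fin.last n) with hL
  set f0 := s.filter (fun p => p.1 (Fin.last n) = 0) with hf0
  set fpos := s.filter (fun p => 0 < p.1 (Fin.last n)) with hfpos
  set fneg := s.filter (fun p => p.1 (Fin.last n) < 0) with hfneg
  refine ⟨f0.image (fun p => (Fin.init p.1, p.2)) ∪
    (fpos ×ˢ fneg).image (fun pq =>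
      ((-(pq.2.1 (Fin.last n))) • Fin.init pq.1.1 + (pq.1.1 (Fin.last n)) • Fin.init pq.2.1,
       (-(pq.2.1 (Fin.last n))) * pq.1.2 + (pq.1.1 (Fin.last n)) * pq.2.2)), ?_⟩
  ext x
  simp only [Set.mem_setOf_eq]
  constructor
  · -- construct t
    intro hx
    -- zero rows
    have hzero : ∀ p ∈ f0, Fin.init p.1 ⬝ᵥ x ≤ p.2 := by
      intro p hp
      exact hx _ (Finset.mem_union_left _ (Finset.mem_image_of_mem _ hp))
    -- pairwise bounds
    have key : ∀ p ∈ fpos, ∀ q ∈ fneg,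
        (q.2 - Fin.init q.1 ⬝ᵥ x) / q.1 (Fin.last n) ≤
        (p.2 - Fin.init p.1 ⬝ᵥ x) / p.1 (Fin.last n) := by
      intro p hp q hq
      have hpl : 0 < p.1 (Fin.last n) := (Finset.mem_filter.mp hp).2
      have hql : q.1 (Fin.last n) < 0 := (Finset.mem_filter.mp hq).2
      have h := hx _ (Finset.mem_union_right _
        (Finset.mem_image_of_mem _ (Finset.mk_mem_product hp hq)))
      simp only [add_dotProduct, smul_dotProduct, smul_eq_mul] at h
      have e1 : (q.2 - Fin.init q.1 ⬝ᵥ x) / q.1 (Fin.last n)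
          = (Fin.init q.1 ⬝ᵥ x - q.2) / (-(q.1 (Fin.last n))) := by
        rw [div_neg]
        ring
      rw [e1, div_le_div_iff₀ (by linarith) hpl]
      nlinarith [h]
    set ub : (Fin (n+1) → ℚ) × ℚ → ℚ :=
      fun p => (p.2 - Fin.init p.1 ⬝ᵥ x) / p.1 (Fin.last n) with hub
    have main : ∀ t : ℚ, (∀ p ∈ fpos, t ≤ ub p) → (∀ q ∈ fneg, ub q ≤ t) →
        Fin.snoc x t ∈ SolSet s := by
      intro t h1 h2 p hp
      rw [dotProduct_snoc]
      rcases lt_trichotomy (p.1 (Fin.last n)) 0 with h | h | h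
      · have := h2 p (Finset.mem_filter.mpr ⟨hp, h⟩)
        rw [hub] at this
        have := (div_le_iff_of_neg h).mp this
        linarith
      · have := hzero p (Finset.mem_filter.mpr ⟨hp, h⟩)
        rw [h]
        linarith
      · have := h1 p (Finset.mem_filter.mpr ⟨hp, h⟩)
        rw [hub] at this
        have := (le_div_iff₀ h).mp this
        linarith
    by_cases hpos : fpos.Nonempty
    · refine ⟨fpos.inf' hpos ub, main _ (fun p hp => Finset.inf'_le _ hp) ?_⟩
      intro q hq
      obtain ⟨p0, hp0, he⟩ := Finset.exists_mem_eq_inf' hpos ub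
      rw [he]
      exact key p0 hp0 q hq
    · by_cases hneg : fneg.Nonempty
      · refine ⟨fneg.sup' hneg ub, main _ ?_ (fun q hq => Finset.le_sup' _ hq)⟩
        intro p hp
        exact absurd ⟨p, hp⟩ hpos
      · refine ⟨0, main 0 ?_ ?_⟩
        · intro p hp; exact absurd ⟨p, hp⟩ hpos
        · intro q hq; exact absurd ⟨q, hq⟩ hneg
  · -- easy direction
    rintro ⟨t, ht⟩ r hr
    rcases Finset.mem_union.mp hr with hr | hr
    · obtain ⟨p, hp, rfl⟩ := Finset.mem_image.mp hr
      have hp0 := (Finset.mem_filter.mp hp).2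
      have := ht p (Finset.mem_filter.mp hp).1
      rw [dotProduct_snoc, hp0] at this
      simpa using this
    · obtain ⟨pq, hpq, rfl⟩ := Finset.mem_image.mp hr
      obtain ⟨hp, hq⟩ := Finset.mem_product.mp hpq
      have hpl : 0 < pq.1.1 (Fin.last n) := (Finset.mem_filter.mp hp).2
      have hql : pq.2.1 (Fin.last n) < 0 := (Finset.mem_filter.mp hq).2
      have h1 := ht pq.1 (Finset.mem_filter.mp hp).1
      have h2 := ht pq.2 (Finset.mem_filter.mp hq).1
      rw [dotProduct_snoc] at h1 h2
      simp only [add_dotProduct, smul_dotProduct, smul_eq_mul]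
      nlinarith [h1, h2]

theorem IsFinPoly.elim_one {P : Set (Fin (n+1) → ℚ)} (hP : IsFinPoly P) :
    IsFinPoly {x : Fin n → ℚ | ∃ t, Fin.snoc x t ∈ P} := by
  obtain ⟨s, rfl⟩ := hP
  obtain ⟨s', hs'⟩ := elim_one_aux s
  exact ⟨s', hs'.symm⟩

end FM


theorem IsFinPoly.elim_many {n : ℕ} : ∀ {k : ℕ} (P : Set (Fin (n + k) → ℚ)), IsFinPoly P →
    IsFinPoly {x : Fin n → ℚ | ∃ w : Fin k → ℚ, Fin.append x w ∈ P} := by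
  intro k
  induction k with
  | zero =>
    intro P hP
    have he : {x : Fin n → ℚ | ∃ w : Fin 0 → ℚ, Fin.append x w ∈ P} = P := by
      ext x
      constructor
      · rintro ⟨w, h⟩
        have : Fin.append x w = x := by
          funext i
          rw [Subsingleton.elim w Fin.elim0, Fin.append_elim0]
          exact congrArg x (Fin.ext rfl)
        rwa [this] at h
      · intro h
        refine ⟨Fin.elim0, ?_⟩
        have : Fin.append x (Fin.elim0 : Fin 0 → ℚ) = x := by
          funext i
          rw [Fin.append_elim0]
          exact congrArg x (Fin.ext rfl)
        rwa [this]
    rwa [he]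
  | succ k ih =>
    intro P hP
    have h1 : IsFinPoly {y : Fin (n + k) → ℚ | ∃ t, Fin.snoc y t ∈ P} := hP.elim_one
    have he : {x : Fin n → ℚ | ∃ w : Fin (k+1) → ℚ, Fin.append x w ∈ P} =
        {x : Fin n → ℚ | ∃ w' : Fin k → ℚ, Fin.append x w' ∈
          {y : Fin (n + k) → ℚ | ∃ t, Fin.snoc y t ∈ P}} := by
      ext x
      constructor
      · rintro ⟨w, h⟩
        refine ⟨Fin.init w, w (Fin.last k), ?_⟩
        rw [← Fin.append_snoc, Fin.snoc_init_self]
        exact h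
      · rintro ⟨w', t, h⟩
        exact ⟨Fin.snoc w' t, by rwa [Fin.append_snoc]⟩
    rw [he]
    exact ih _ h1

/-- The left/right components of a vector in `ℚ^(n+k)`. -/
theorem IsFinPoly.image {k n : ℕ} {P : Set (Fin k → ℚ)} (hP : IsFinPoly P)
    (M : Matrix (Fin n) (Fin k) ℚ) :
    IsFinPoly {y : Fin n → ℚ | ∃ x ∈ P, y = M.mulVec x} := by
  classical
  obtain ⟨s, rfl⟩ := hP
  set R : Set (Fin (n + k) → ℚ) := SolSet (
    (s.image fun p => (Fin.append (0 : Fin n → ℚ) p.1, p.2)) ∪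
    ((Finset.univ : Finset (Fin n)).image
      fun i => (Fin.append (Pi.single i 1) (-(M i)), (0:ℚ))) ∪
    ((Finset.univ : Finset (Fin n)).image
      fun i => (Fin.append (-(Pi.single i (1:ℚ))) (M i), (0:ℚ)))) with hRdef
  have hR : ∀ z : Fin (n + k) → ℚ, z ∈ R ↔
      ((fun j => z (Fin.natAdd n j)) ∈ SolSet s ∧
        (fun i => z (Fin.castAdd k i)) = M.mulVec fun j => z (Fin.natAdd n j)) := by
    intro z
    constructor
    · intro hz
      constructor
      · intro p hp
        have := hz _ (Finset.mem_union_left _ (Finset.mem_union_left _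
          (Finset.mem_image_of_mem _ hp)))
        rwa [dotProduct_append, zero_dotProduct, zero_add] at this
      · funext i
        have h1 := hz _ (Finset.mem_union_left _ (Finset.mem_union_right _
          (Finset.mem_image_of_mem _ (Finset.mem_univ i))))
        have h2 := hz _ (Finset.mem_union_right _
          (Finset.mem_image_of_mem _ (Finset.mem_univ i)))
        rw [dotProduct_append, single_dotProduct, one_mul, neg_dotProduct] at h1
        rw [dotProduct_append, neg_dotProduct, single_dotProduct, one_mul] at h2
        simp only [Prod.snd] at h1 h2
        have : (M.mulVec fun j => z (Fin.natAdd n j)) i = M i ⬝ᵥ fun j => z (Fin.natAdd n j) :=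
          rfl
        rw [this]
        linarith
    · rintro ⟨h1, h2⟩ r hr
      rcases Finset.mem_union.mp hr with hr | hr
      · rcases Finset.mem_union.mp hr with hr | hr
        · obtain ⟨p, hp, rfl⟩ := Finset.mem_image.mp hr
          rw [dotProduct_append, zero_dotProduct, zero_add]
          exact h1 p hp
        · obtain ⟨i, _, rfl⟩ := Finset.mem_image.mp hr
          rw [dotProduct_append, single_dotProduct, one_mul, neg_dotProduct]
          simp only [Prod.snd]
          have := congrFun h2 i
          have hMV : (M.mulVec fun j => z (Fin.natAdd n j)) i
              = M i ⬝ᵥ fun j => z (Fin.natAdd n j) := rfl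
          rw [hMV] at this
          linarith
      · obtain ⟨i, _, rfl⟩ := Finset.mem_image.mp hr
        rw [dotProduct_append, neg_dotProduct, single_dotProduct, one_mul]
        simp only [Prod.snd]
        have := congrFun h2 i
        have hMV : (M.mulVec fun j => z (Fin.natAdd n j)) i
            = M i ⬝ᵥ fun j => z (Fin.natAdd n j) := rfl
        rw [hMV] at this
        linarith
  have he : {y : Fin n → ℚ | ∃ x ∈ SolSet s, y = M.mulVec x} =
      {y : Fin n → ℚ | ∃ w : Fin k → ℚ, Fin.append y w ∈ R} := by
    ext y
    constructor
    · rintro ⟨x, hx, rfl⟩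
      refine ⟨x, (hR _).2 ⟨?_, ?_⟩⟩
      · have : (fun j => Fin.append (M.mulVec x) x (Fin.natAdd n j)) = x := by
          funext j; rw [Fin.append_right]
        rwa [this]
      · funext i
        rw [Fin.append_left]
        congr 1
        funext j; rw [Fin.append_right]
    · rintro ⟨w, hw⟩
      obtain ⟨h1, h2⟩ := (hR _).1 hw
      have hl : (fun i => Fin.append y w (Fin.castAdd k i)) = y := by
        funext i; rw [Fin.append_left]
      have hr : (fun j => Fin.append y w (Fin.natAdd n j)) = w := by
        funext j; rw [Fin.append_right]
      rw [hl, hr] at h2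
      rw [hr] at h1
      exact ⟨w, h1, h2⟩
  rw [he]
  exact IsFinPoly.elim_many R ⟨_, hRdef⟩


def Cone {n k : ℕ} (v : Fin k → (Fin n → ℚ)) : Set (Fin n → ℚ) :=
  {x | ∃ lam : Fin k → ℚ, 0 ≤ lam ∧ x = ∑ i, lam i • v i}

theorem mem_cone_self {n k : ℕ} (v : Fin k → (Fin n → ℚ)) (i : Fin k) : v i ∈ Cone v := by
  refine ⟨Pi.single i 1, ?_, ?_⟩
  · intro j
    by_cases h : j = i <;> simp [Pi.single_apply, h]
  · rw [Finset.sum_eq_single_of_mem i (Finset.mem_univ i)]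
    · simp
    · intro j _ hj
      simp [Pi.single_apply, hj]

theorem dot_nonpos_of_mem_cone {n k : ℕ} {v : Fin k → (Fin n → ℚ)} {a x : Fin n → ℚ}
    (hx : x ∈ Cone v) (h : ∀ i, a ⬝ᵥ v i ≤ 0) : a ⬝ᵥ x ≤ 0 := by
  obtain ⟨lam, hlam, rfl⟩ := hx
  have key : a ⬝ᵥ ∑ i, lam i • v i = ∑ i, lam i * (a ⬝ᵥ v i) := by
    simp only [dotProduct, Finset.sum_apply, Pi.smul_apply, smul_eq_mul, Finset.mul_sum]
    rw [Finset.sum_comm]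
    exact Finset.sum_congr rfl fun i _ => Finset.sum_congr rfl fun j _ => by ring
  rw [key]
  apply Finset.sum_nonpos
  intro i _
  exact mul_nonpos_of_nonneg_of_nonpos (hlam i) (h i)

theorem cone_isFinPoly {n k : ℕ} (v : Fin k → (Fin n → ℚ)) : IsFinPoly (Cone v) := by
  classical
  have horth : ({lam | 0 ≤ lam} : Set (Fin k → ℚ)) =
      SolSet ((Finset.univ : Finset (Fin k)).image fun i => (-(Pi.single i (1:ℚ)), (0:ℚ))) := by
    ext lam
    simp only [Set.mem_setOf_eq, SolSet, Finset.mem_image, Finset.mem_univ, true_and, Pi.le_def,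
      Pi.zero_apply]
    constructor
    · rintro h p ⟨i, rfl⟩
      simp only [Prod.fst, Prod.snd, neg_dotProduct, single_dotProduct, one_mul]
      linarith [h i]
    · intro h i
      have := h _ ⟨i, rfl⟩
      simp only [Prod.fst, Prod.snd, neg_dotProduct, single_dotProduct, one_mul] at this
      linarith
  set V : Matrix (Fin n) (Fin k) ℚ := Matrix.of fun j i => v i j with hV
  have he : Cone v = {x | ∃ lam ∈ ({lam | 0 ≤ lam} : Set (Fin k → ℚ)), x = V.mulVec lam} := by
    have key : ∀ lam : Fin k → ℚ, V.mulVec lam = ∑ i, lam i • v i := by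
      intro lam
      funext j
      rw [Finset.sum_apply]
      simp only [Matrix.mulVec, dotProduct, hV, Matrix.of_apply, Pi.smul_apply,
        smul_eq_mul]
      exact Finset.sum_congr rfl fun i _ => mul_comm _ _
    ext x
    constructor
    · rintro ⟨lam, hlam, h⟩
      exact ⟨lam, hlam, by rw [key]; exact h⟩
    · rintro ⟨lam, hlam, h⟩
      exact ⟨lam, hlam, by rw [← key]; exact h⟩
  rw [he]
  exact IsFinPoly.image ⟨_, horth⟩ V

/-- Weyl in homogeneous form: a f.g. cone is the solution set of `Bx ≤ 0`. -/
theorem cone_homog {n k : ℕ} (v : Fin k → (Fin n → ℚ)) :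
    ∃ (m : ℕ) (B : Matrix (Fin m) (Fin n) ℚ), Cone v = {x | B.mulVec x ≤ 0} := by
  obtain ⟨m, B, b, hB⟩ := (isFinPoly_iff _).mp (cone_isFinPoly v)
  have hzero : (0 : Fin n → ℚ) ∈ Cone v := ⟨0, le_refl _, by simp⟩
  have hb : ∀ j, (0:ℚ) ≤ b j := by
    have h0 := hB ▸ hzero
    intro j
    have := h0 j
    rwa [Matrix.mulVec_zero] at this
  have hscale : ∀ (c : ℚ), 0 ≤ c → ∀ x ∈ Cone v, c • x ∈ Cone v := by
    rintro c hc x ⟨lam, hlam, rfl⟩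
    refine ⟨c • lam, ?_, ?_⟩
    · intro i
      exact mul_nonneg hc (hlam i)
    · rw [Finset.smul_sum]
      exact Finset.sum_congr rfl fun i _ => by rw [Pi.smul_apply, smul_smul, smul_eq_mul]
  refine ⟨m, B, ?_⟩
  ext x
  constructor
  · intro hx
    intro j
    by_contra hcon
    push_neg at hcon
    have hpos : 0 < (B.mulVec x) j := hcon
    set c : ℚ := (b j + 1) / (B.mulVec x) j with hc
    have hcpos : 0 < c := div_pos (by linarith [hb j]) hpos
    have hmem : c • x ∈ Cone v := hscale c hcpos.le x hx
    rw [hB] at hmem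
    have := hmem j
    rw [Matrix.mulVec_smul] at this
    have : c * (B.mulVec x) j ≤ b j := this
    rw [hc, div_mul_cancel₀ _ (ne_of_gt hpos)] at this
    linarith
  · intro hx
    rw [hB]
    intro j
    exact le_trans (hx j) (hb j)

/-- Minkowski: a polyhedral cone is finitely generated. -/
theorem homog_cone {m n : ℕ} (A : Matrix (Fin m) (Fin n) ℚ) :
    ∃ (k : ℕ) (g : Fin k → (Fin n → ℚ)), {x | A.mulVec x ≤ 0} = Cone g := by
  obtain ⟨m2, B, hB⟩ := cone_homog (fun i : Fin m => A i)
  obtain ⟨m3, G, hG⟩ := cone_homog (fun j : Fin m2 => B j)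
  refine ⟨m2, (fun j : Fin m2 => B j), ?_⟩
  ext x
  constructor
  · intro hx
    by_contra hxE
    rw [hG] at hxE
    simp only [Set.mem_setOf_eq, Pi.le_def, not_forall] at hxE
    obtain ⟨k0, hk0⟩ := hxE
    push_neg at hk0
    have hk0' : 0 < G k0 ⬝ᵥ x := by have h := hk0; simp at h; exact h
    have hGk0D : G k0 ∈ Cone (fun i : Fin m => A i) := by
      rw [hB]
      intro j
      have hBj : (B j : Fin n → ℚ) ∈ Cone (fun j : Fin m2 => B j) :=
        mem_cone_self (fun j : Fin m2 => B j) j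
      rw [hG] at hBj
      have h2 : G k0 ⬝ᵥ B j ≤ 0 := hBj k0
      show B j ⬝ᵥ G k0 ≤ (0:ℚ)
      rw [dotProduct_comm]
      exact h2
    have : x ⬝ᵥ G k0 ≤ 0 := by
      apply dot_nonpos_of_mem_cone hGk0D
      intro i
      rw [dotProduct_comm]
      exact hx i
    rw [dotProduct_comm] at this
    linarith
  · intro hx
    intro i
    show A i ⬝ᵥ x ≤ (0:ℚ)
    apply dot_nonpos_of_mem_cone hx
    intro j
    have hAiD : (A i : Fin n → ℚ) ∈ Cone (fun i : Fin m => A i) :=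
      mem_cone_self (fun i : Fin m => A i) i
    rw [hB] at hAiD
    have h2 : B j ⬝ᵥ A i ≤ 0 := hAiD j
    rw [dotProduct_comm]
    exact h2


theorem mulVec_eq_sum {n k : ℕ} (v : Fin k → (Fin n → ℚ)) (lam : Fin k → ℚ) :
    (Matrix.of fun j i => v i j).mulVec lam = ∑ i, lam i • v i := by
  funext j
  rw [Finset.sum_apply]
  simp only [Matrix.mulVec, dotProduct, Matrix.of_apply, Pi.smul_apply, smul_eq_mul]
  exact Finset.sum_congr rfl fun i _ => mul_comm _ _

theorem cone_rescale {n k : ℕ} (v : Fin k → (Fin n → ℚ)) (c : Fin k → ℚ)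
    (hc : ∀ i, 0 < c i) : Cone (fun i => c i • v i) = Cone v := by
  ext x
  constructor
  · rintro ⟨lam, hlam, rfl⟩
    refine ⟨fun i => lam i * c i, fun i => mul_nonneg (hlam i) (hc i).le, ?_⟩
    exact Finset.sum_congr rfl fun i _ => by rw [smul_smul]
  · rintro ⟨lam, hlam, rfl⟩
    refine ⟨fun i => lam i / c i, fun i => div_nonneg (hlam i) (hc i).le, ?_⟩
    refine Finset.sum_congr rfl fun i _ => ?_
    rw [smul_smul, div_mul_cancel₀ _ (hc i).ne']

theorem sum_isFinPoly {n : ℕ} {P1 P2 : Set (Fin n → ℚ)} (h1 : IsFinPoly P1)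
    (h2 : IsFinPoly P2) : IsFinPoly {z | ∃ c ∈ P1, ∃ q ∈ P2, z = c + q} := by
  classical
  obtain ⟨s1, rfl⟩ := h1
  obtain ⟨s2, rfl⟩ := h2
  set R : Set (Fin (n + n) → ℚ) := SolSet (
    (s1.image fun p => (Fin.append p.1 (0 : Fin n → ℚ), p.2)) ∪
    (s2.image fun p => (Fin.append (0 : Fin n → ℚ) p.1, p.2))) with hRdef
  set M : Matrix (Fin n) (Fin (n + n)) ℚ :=
    Matrix.of fun i => Fin.append (Pi.single i (1:ℚ)) (Pi.single i (1:ℚ)) with hM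
  have hMv : ∀ w : Fin (n + n) → ℚ, M.mulVec w =
      (fun i => w (Fin.castAdd n i)) + fun i => w (Fin.natAdd n i) := by
    intro w
    funext i
    show Fin.append (Pi.single i (1:ℚ)) (Pi.single i (1:ℚ)) ⬝ᵥ w = _
    rw [dotProduct_append, single_dotProduct, single_dotProduct, one_mul, one_mul]
    rfl
  have he : {z | ∃ c ∈ SolSet s1, ∃ q ∈ SolSet s2, z = c + q} =
      {z : Fin n → ℚ | ∃ w ∈ R, z = M.mulVec w} := by
    ext z
    constructor
    · rintro ⟨c, hc, q, hq, rfl⟩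
      refine ⟨Fin.append c q, ?_, ?_⟩
      · intro r hr
        rcases Finset.mem_union.mp hr with hr | hr
        · obtain ⟨p, hp, rfl⟩ := Finset.mem_image.mp hr
          rw [dotProduct_append]
          have hl : (fun i => Fin.append c q (Fin.castAdd n i)) = c := by
            funext i; rw [Fin.append_left]
          rw [hl, zero_dotProduct, add_zero]
          exact hc p hp
        · obtain ⟨p, hp, rfl⟩ := Finset.mem_image.mp hr
          rw [dotProduct_append]
          have hrr : (fun i => Fin.append c q (Fin.natAdd n i)) = q := by
            funext i; rw [Fin.append_right]
          rw [hrr, zero_dotProduct, zero_add]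
          exact hq p hp
      · rw [hMv]
        funext i
        simp only [Pi.add_apply, Fin.append_left, Fin.append_right]
    · rintro ⟨w, hw, rfl⟩
      refine ⟨fun i => w (Fin.castAdd n i), ?_, fun i => w (Fin.natAdd n i), ?_, hMv w⟩
      · intro p hp
        have := hw _ (Finset.mem_union_left _ (Finset.mem_image_of_mem _ hp))
        rwa [dotProduct_append, zero_dotProduct, add_zero] at this
      · intro p hp
        have := hw _ (Finset.mem_union_right _ (Finset.mem_image_of_mem _ hp))
        rwa [dotProduct_append, zero_dotProduct, zero_add] at this
  rw [he]
  exact IsFinPoly.image ⟨_, hRdef⟩ M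

/-- Homogenization: the polyhedron `Ax ≤ b` corresponds to a f.g. cone in one
more dimension, with generators whose last coordinates are `0` or `1`. -/
theorem homogenization {m n : ℕ} (A : Matrix (Fin m) (Fin n) ℚ) (b : Fin m → ℚ) :
    ∃ (k : ℕ) (g' : Fin k → (Fin (n+1) → ℚ)) (t' : Fin k → ℚ),
      (∀ i, g' i (Fin.last n) = t' i) ∧ (∀ i, t' i = 0 ∨ t' i = 1) ∧
      ∀ (x : Fin n → ℚ) (t : ℚ),
        Fin.snoc x t ∈ Cone g' ↔ (∀ i, A i ⬝ᵥ x ≤ b i * t) ∧ 0 ≤ t := by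
  classical
  obtain ⟨A', hrow, hlastrow⟩ :
      ∃ A' : Matrix (Fin (m+1)) (Fin (n+1)) ℚ,
        (∀ i : Fin m, A' (Fin.castSucc i) = Fin.snoc (A i) (-(b i))) ∧
          A' (Fin.last m) = Fin.snoc (0 : Fin n → ℚ) (-1) := by
    refine ⟨Matrix.of (Fin.snoc (fun i => Fin.snoc (A i) (-(b i)))
      (Fin.snoc (0 : Fin n → ℚ) (-1))), fun i => ?_, ?_⟩
    · show (Fin.snoc (fun i' => Fin.snoc (A i') (-(b i')))
          (Fin.snoc (0 : Fin n → ℚ) (-1)) : Fin (m+1) → (Fin (n+1) → ℚ))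
          (Fin.castSucc i) = _
      rw [Fin.snoc_castSucc]
    · show (Fin.snoc (fun i' => Fin.snoc (A i') (-(b i')))
          (Fin.snoc (0 : Fin n → ℚ) (-1)) : Fin (m+1) → (Fin (n+1) → ℚ))
          (Fin.last m) = _
      rw [Fin.snoc_last]
  have hC' : ∀ (x : Fin n → ℚ) (t : ℚ),
      A'.mulVec (Fin.snoc x t) ≤ 0 ↔ (∀ i, A i ⬝ᵥ x ≤ b i * t) ∧ 0 ≤ t := by
    intro x t
    constructor
    · intro h
      constructor
      · intro i
        have h1 : A' (Fin.castSucc i) ⬝ᵥ Fin.snoc x t ≤ (0:ℚ) := h (Fin.castSucc i)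
        rw [hrow, dotProduct_snoc, Fin.init_snoc, Fin.snoc_last] at h1
        linarith
      · have h1 : A' (Fin.last m) ⬝ᵥ Fin.snoc x t ≤ (0:ℚ) := h (Fin.last m)
        rw [hlastrow, dotProduct_snoc, Fin.init_snoc, Fin.snoc_last,
          zero_dotProduct] at h1
        linarith
    · rintro ⟨h1, h2⟩ j
      show A' j ⬝ᵥ Fin.snoc x t ≤ (0:ℚ)
      rcases Fin.eq_castSucc_or_eq_last j with ⟨i, rfl⟩ | rfl
      · rw [hrow, dotProduct_snoc, Fin.init_snoc, Fin.snoc_last]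
        linarith [h1 i]
      · rw [hlastrow, dotProduct_snoc, Fin.init_snoc, Fin.snoc_last, zero_dotProduct]
        linarith
  obtain ⟨k, g, hg⟩ := homog_cone A'
  have hglast : ∀ i, 0 ≤ g i (Fin.last n) := by
    intro i
    have hgi : A'.mulVec (g i) ≤ 0 := by
      have : g i ∈ {y | A'.mulVec y ≤ 0} := by rw [hg]; exact mem_cone_self g i
      exact this
    have h2 : A'.mulVec (Fin.snoc (Fin.init (g i)) (g i (Fin.last n))) ≤ 0 := by
      rw [Fin.snoc_init_self]; exact hgi
    exact ((hC' _ _).mp h2).2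
  obtain ⟨c, hcpos, hcprop⟩ : ∃ c : Fin k → ℚ, (∀ i, 0 < c i) ∧
      (∀ i, c i * g i (Fin.last n) = 0 ∨ c i * g i (Fin.last n) = 1) := by
    refine ⟨fun i => if g i (Fin.last n) = 0 then 1 else (g i (Fin.last n))⁻¹,
      fun i => ?_, fun i => ?_⟩
    · dsimp only
      split_ifs with h
      · norm_num
      · exact inv_pos.2 (lt_of_le_of_ne (hglast i) (Ne.symm h))
    · dsimp only
      split_ifs with h
      · left; rw [h, mul_zero]
      · right; exact inv_mul_cancel₀ h
  have hg' : {x | A'.mulVec x ≤ 0} = Cone (fun i => c i • g i) :=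
    hg.trans (cone_rescale g c hcpos).symm
  refine ⟨k, fun i => c i • g i, fun i => (c i • g i) (Fin.last n),
    fun i => rfl, hcprop, ?_⟩
  intro x t
  rw [← hg']
  exact hC' x t

/-- The "polytope part" built from generators with last coordinate 1. -/
theorem Q_is_polytope {n k : ℕ} (w : Fin k → (Fin n → ℚ)) (t' : Fin k → ℚ)
    (ht01 : ∀ i, t' i = 0 ∨ t' i = 1) (hw0 : ∀ i, t' i = 0 → w i = 0) :
    IsPolytope {x | ∃ mu : Fin k → ℚ, 0 ≤ mu ∧ t' ⬝ᵥ mu = 1 ∧ x = ∑ i, mu i • w i} := by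
  classical
  constructor
  · -- polyhedron
    rw [← isFinPoly_iff]
    set S := SolSet (((Finset.univ : Finset (Fin k)).image
        fun i => (-(Pi.single i (1:ℚ)), (0:ℚ))) ∪ {(t', (1:ℚ)), (-t', (-1:ℚ))}) with hS
    have hSmem : ∀ mu : Fin k → ℚ, mu ∈ S ↔ 0 ≤ mu ∧ t' ⬝ᵥ mu = 1 := by
      intro mu
      constructor
      · intro h
        have h1 := h (t', (1:ℚ)) (Finset.mem_union_right _ (by simp))
        have h2 := h (-t', (-1:ℚ)) (Finset.mem_union_right _ (by simp))
        simp only [Prod.fst, Prod.snd, neg_dotProduct] at h1 h2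
        refine ⟨fun i => ?_, by linarith⟩
        have h3 := h _ (Finset.mem_union_left _
          (Finset.mem_image_of_mem _ (Finset.mem_univ i)))
        simp only [Prod.fst, Prod.snd, neg_dotProduct, single_dotProduct, one_mul] at h3
        show (0:ℚ) ≤ mu i
        linarith
      · rintro ⟨h1, h2⟩ p hp
        have h1' : ∀ i, (0:ℚ) ≤ mu i := fun i => h1 i
        rcases Finset.mem_union.mp hp with hp | hp
        · obtain ⟨i, _, rfl⟩ := Finset.mem_image.mp hp
          simp only [Prod.fst, Prod.snd, neg_dotProduct, single_dotProduct, one_mul]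
          linarith [h1' i]
        · rcases Finset.mem_insert.mp hp with rfl | hp
          · simp only [Prod.fst, Prod.snd]
            linarith [h2.le]
          · rw [Finset.mem_singleton.mp hp]
            simp only [Prod.fst, Prod.snd, neg_dotProduct]
            linarith [h2.ge]
    have he : {x | ∃ mu : Fin k → ℚ, 0 ≤ mu ∧ t' ⬝ᵥ mu = 1 ∧ x = ∑ i, mu i • w i}
        = {x | ∃ mu ∈ S, x = (Matrix.of fun j i => w i j).mulVec mu} := by
      ext x
      constructor
      · rintro ⟨mu, h1, h2, rfl⟩
        exact ⟨mu, (hSmem mu).2 ⟨h1, h2⟩, (mulVec_eq_sum w mu).symm⟩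
      · rintro ⟨mu, hmu, rfl⟩
        obtain ⟨h1, h2⟩ := (hSmem mu).1 hmu
        exact ⟨mu, h1, h2, mulVec_eq_sum w mu⟩
    rw [he]
    exact IsFinPoly.image ⟨_, hS⟩ _
  · -- bounded
    refine ⟨∑ i, ∑ j, |w i j|, ?_⟩
    rintro x ⟨mu, hmu, hmu1, rfl⟩ j
    have hmu' : ∀ i, (0:ℚ) ≤ mu i := fun i => hmu i
    set M : ℚ := ∑ i, ∑ j, |w i j| with hMdef
    have hMb : ∀ i j, |w i j| ≤ M := by
      intro i j
      have hA : |w i j| ≤ ∑ j', |w i j'| :=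
        Finset.single_le_sum (f := fun j' => |w i j'|)
          (fun j' _ => abs_nonneg _) (Finset.mem_univ j)
      have hB : (∑ j', |w i j'|) ≤ M := by
        rw [hMdef]
        exact Finset.single_le_sum (f := fun i' => ∑ j', |w i' j'|)
          (fun i' _ => Finset.sum_nonneg fun j' _ => abs_nonneg _) (Finset.mem_univ i)
      linarith
    have he : (∑ i, mu i • w i) j = ∑ i, mu i * w i j := by
      rw [Finset.sum_apply]
      rfl
    rw [he]
    calc |∑ i, mu i * w i j| ≤ ∑ i, |mu i * w i j| := Finset.abs_sum_le_sum_abs _ _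
      _ ≤ ∑ i, (t' i * mu i) * M := by
          refine Finset.sum_le_sum fun i _ => ?_
          rw [abs_mul, abs_of_nonneg (hmu' i)]
          rcases ht01 i with h | h
          · rw [h, hw0 i h]
            simp
          · rw [h, one_mul]
            exact mul_le_mul_of_nonneg_left (hMb i j) (hmu' i)
      _ = (t' ⬝ᵥ mu) * M := by
          rw [dotProduct, Finset.sum_mul]
      _ = M := by rw [hmu1, one_mul]

/-- The decomposition at the level of membership. -/
theorem decomp_mem_iff {n k : ℕ} (g' : Fin k → (Fin (n+1) → ℚ)) (t' : Fin k → ℚ)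
    (ht' : ∀ i, g' i (Fin.last n) = t' i) (ht01 : ∀ i, t' i = 0 ∨ t' i = 1)
    (u w : Fin k → (Fin n → ℚ))
    (hu : ∀ i, u i = (1 - t' i) • Fin.init (g' i))
    (hw : ∀ i, w i = t' i • Fin.init (g' i)) (z : Fin n → ℚ) :
    Fin.snoc z (1:ℚ) ∈ Cone g' ↔
      ∃ c ∈ Cone u, ∃ q ∈ {x | ∃ mu : Fin k → ℚ, 0 ≤ mu ∧ t' ⬝ᵥ mu = 1 ∧
        x = ∑ i, mu i • w i}, z = c + q := by
  constructor
  · rintro ⟨lam, hlam, hsum⟩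
    have hlam' : ∀ i, (0:ℚ) ≤ lam i := fun i => hlam i
    have hlast : (1:ℚ) = ∑ i, lam i * t' i := by
      have h3 := congrFun hsum (Fin.last n)
      rw [Fin.snoc_last, Finset.sum_apply] at h3
      rw [h3]
      exact Finset.sum_congr rfl fun i _ => by
        rw [Pi.smul_apply, smul_eq_mul, ht' i]
    refine ⟨∑ i, ((1 - t' i) * lam i) • u i, ⟨_, fun i => ?_, rfl⟩,
      ∑ i, (t' i * lam i) • w i, ⟨fun i => t' i * lam i, fun i => ?_, ?_, rfl⟩, ?_⟩
    · show (0:ℚ) ≤ (1 - t' i) * lam i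
      rcases ht01 i with h | h <;> rw [h] <;> nlinarith [hlam' i]
    · show (0:ℚ) ≤ t' i * lam i
      rcases ht01 i with h | h <;> rw [h] <;> nlinarith [hlam' i]
    · rw [dotProduct]
      rw [show ∑ i, t' i * (t' i * lam i) = ∑ i, lam i * t' i from
        Finset.sum_congr rfl fun i _ => by
          rcases ht01 i with h | h <;> rw [h] <;> ring]
      exact hlast.symm
    · have key : ∑ i, ((1 - t' i) * lam i) • u i + ∑ i, (t' i * lam i) • w i
          = ∑ i, lam i • Fin.init (g' i) := by
        rw [← Finset.sum_add_distrib]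
        refine Finset.sum_congr rfl fun i _ => ?_
        rw [hu i, hw i, smul_smul, smul_smul, ← add_smul]
        have hs : (1 - t' i) * lam i * (1 - t' i) + t' i * lam i * t' i = lam i := by
          rcases ht01 i with h | h <;> rw [h] <;> ring
        rw [hs]
      rw [key]
      funext j
      have h3 := congrFun hsum (Fin.castSucc j)
      rw [Fin.snoc_castSucc] at h3
      rw [h3, Finset.sum_apply, Finset.sum_apply]
      exact Finset.sum_congr rfl fun i _ => rfl
  · rintro ⟨cc, ⟨al, hal0, rfl⟩, q, ⟨mu, hmu0, hmu1, rfl⟩, rfl⟩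
    refine ⟨fun i => (1 - t' i) * al i + t' i * mu i, fun i => ?_, ?_⟩
    · show (0:ℚ) ≤ (1 - t' i) * al i + t' i * mu i
      have ha : (0:ℚ) ≤ al i := hal0 i
      have hb : (0:ℚ) ≤ mu i := hmu0 i
      rcases ht01 i with h | h <;> rw [h] <;> nlinarith
    · funext j'
      rcases Fin.eq_castSucc_or_eq_last j' with ⟨j, rfl⟩ | rfl
      · rw [Fin.snoc_castSucc, Pi.add_apply, Finset.sum_apply, Finset.sum_apply,
          Finset.sum_apply, ← Finset.sum_add_distrib]
        refine Finset.sum_congr rfl fun i _ => ?_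
        show (al i • u i) j + (mu i • w i) j
          = (((1 - t' i) * al i + t' i * mu i) • g' i) j.castSucc
        have h1 : u i j = (1 - t' i) * g' i (Fin.castSucc j) := by
          rw [hu i]; rfl
        have h2 : w i j = t' i * g' i (Fin.castSucc j) := by
          rw [hw i]; rfl
        simp only [Pi.smul_apply, smul_eq_mul]
        rw [h1, h2]
        rcases ht01 i with h | h <;> rw [h] <;> ring
      · rw [Fin.snoc_last, Finset.sum_apply]
        have hterm : ∀ i, ((((1 - t' i) * al i + t' i * mu i)) • g' i) (Fin.last n)
            = t' i * mu i := by
          intro i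
          rw [Pi.smul_apply, smul_eq_mul, ht' i]
          rcases ht01 i with h | h <;> rw [h] <;> ring
        rw [Finset.sum_congr rfl fun i _ => hterm i]
        rw [dotProduct] at hmu1
        exact hmu1.symm

set_option maxHeartbeats 1000000 in
theorem polyhedron_decomposition (n : ℕ) (P : Set (Fin n → ℚ)) :
    IsPolyhedron P ↔
      ∃ C Q : Set (Fin n → ℚ), IsFinitelyGeneratedCone C ∧ IsPolytope Q ∧
        P = {z | ∃ c ∈ C, ∃ q ∈ Q, z = c + q} := by
  constructor
  · rintro ⟨m, A, b, rfl⟩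
    obtain ⟨k, g', t', ht', ht01, hiff⟩ := homogenization A b
    set u : Fin k → (Fin n → ℚ) := fun i => (1 - t' i) • Fin.init (g' i) with hu
    set w : Fin k → (Fin n → ℚ) := fun i => t' i • Fin.init (g' i) with hw
    have hw0 : ∀ i, t' i = 0 → w i = 0 := by
      intro i h
      rw [hw]
      dsimp only
      rw [h, zero_smul]
    refine ⟨Cone u, _, ⟨k, u, rfl⟩, Q_is_polytope w t' ht01 hw0, ?_⟩
    ext z
    rw [show (z ∈ {x | A.mulVec x ≤ b}) = ((∀ i, A i ⬝ᵥ z ≤ b i * 1) ∧ (0:ℚ) ≤ 1) from ?_]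
    · rw [← hiff z 1]
      exact decomp_mem_iff g' t' ht' ht01 u w (fun i => rfl) (fun i => rfl) z
    · apply propext
      constructor
      · intro hz
        exact ⟨fun i => by rw [mul_one]; exact hz i, by norm_num⟩
      · rintro ⟨h1, _⟩ i
        have := h1 i
        rwa [mul_one] at this
  · rintro ⟨C, Q, ⟨k, v, rfl⟩, ⟨hQpoly, _⟩, rfl⟩
    rw [← isFinPoly_iff]
    have hC : IsFinPoly (Cone v) := cone_isFinPoly v
    have hQ : IsFinPoly Q := (isFinPoly_iff Q).mpr hQpoly
    exact sum_isFinPoly hC hQ
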